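/- Let {N_{β0β1}} be a POVM on ℂ² and set B0 = N_{00}+N_{01}−N_{10}−N_{11}, B1 = N_{00}−N_{01}+N_{10}−N_{11}. Then for every θ− ∈ (0, π/2): (1/2)[Tr(Z·B0) + Tr(Z·B1) − sin(θ−)·Tr(X·B0) + sin(θ−)·Tr(X·B1) + cos(θ−)·Tr(B0 + B1)] ≤ 2. -/

import Mathlib

open Matrix ComplexOrder

lemma quadform (M : Matrix (Fin 2) (Fin 2) ℂ) (h : M.PosSemidef) (u v : ℝ) :
    0 ≤ u*u*(M 0 0).re + u*v*((M 0 1).re + (M 1 0).re) + v*v*(M 1 1).re := by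
  have h2 := h.dotProduct_mulVec_nonneg ![(u:ℂ), (v:ℂ)]
  rw [Complex.le_def] at h2
  have := h2.1
  simp [dotProduct, Matrix.mulVec, Fin.sum_univ_two, Complex.add_re, Complex.mul_re] at this
  ring_nf at this ⊢
  linarith

set_option maxHeartbeats 1000000 in
theorem stmt12 (N : Fin 2 → Fin 2 → Matrix (Fin 2) (Fin 2) ℂ)
    (hpos : ∀ i j, (N i j).PosSemidef)
    (hsum : N 0 0 + N 0 1 + N 1 0 + N 1 1 = 1)
    (θ : ℝ) (hθ : θ ∈ Set.Ioo 0 (Real.pi / 2)) :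
    (1 / 2 : ℝ) *
      (((!![1, 0; 0, -1] : Matrix (Fin 2) (Fin 2) ℂ) *
          (N 0 0 + N 0 1 - N 1 0 - N 1 1)).trace +
       ((!![1, 0; 0, -1] : Matrix (Fin 2) (Fin 2) ℂ) *
          (N 0 0 - N 0 1 + N 1 0 - N 1 1)).trace -
       (Real.sin θ : ℂ) * ((!![0, 1; 1, 0] : Matrix (Fin 2) (Fin 2) ℂ) *
          (N 0 0 + N 0 1 - N 1 0 - N 1 1)).trace +
       (Real.sin θ : ℂ) * ((!![0, 1; 1, 0] : Matrix (Fin 2) (Fin 2) ℂ) *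
          (N 0 0 - N 0 1 + N 1 0 - N 1 1)).trace +
       (Real.cos θ : ℂ) *
          ((N 0 0 + N 0 1 - N 1 0 - N 1 1) + (N 0 0 - N 0 1 + N 1 0 - N 1 1)).trace).re
      ≤ 2 := by
  obtain ⟨hθ0, hθ1⟩ := hθ
  set S := Real.sin θ with hSdef
  set C := Real.cos θ with hCdef
  have hS0 : 0 ≤ S := Real.sin_nonneg_of_nonneg_of_le_pi hθ0.le
    (le_trans hθ1.le (by linarith [Real.pi_pos]))
  have hC1 : C ≤ 1 := Real.cos_le_one θ
  have hC1' : -1 ≤ C := Real.neg_one_le_cos θ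
  have hpyth : S^2 + C^2 = 1 := Real.sin_sq_add_cos_sq θ
  set u := Real.sqrt (1 + C) with hu
  set v := Real.sqrt (1 - C) with hv
  have hu2 : u * u = 1 + C := Real.mul_self_sqrt (by linarith)
  have hv2 : v * v = 1 - C := Real.mul_self_sqrt (by linarith)
  have huv : u * v = S := by
    rw [hu, hv, ← Real.sqrt_mul (by linarith)]
    rw [show (1+C)*(1-C) = S^2 by nlinarith]
    exact Real.sqrt_sq hS0
  -- quadratic-form inequalities
  have q01 := quadform (N 0 1) (hpos 0 1) u v
  have q10 := quadform (N 1 0) (hpos 1 0) u (-v)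
  have q00 := quadform (N 0 0) (hpos 0 0) 0 1
  have q11 := quadform (N 1 1) (hpos 1 1) 1 0
  rw [hu2, hv2, huv] at q01
  rw [show u * -v = -S by rw [mul_neg, huv], show -v * -v = 1 - C by rw [neg_mul_neg, hv2],
    hu2] at q10
  norm_num at q00 q11
  -- sum constraints, entrywise real parts
  have hsumE : ∀ a b : Fin 2,
      ((N 0 0) a b).re + ((N 0 1) a b).re + ((N 1 0) a b).re + ((N 1 1) a b).re
        = ((1 : Matrix (Fin 2) (Fin 2) ℂ) a b).re := by
    intro a b
    have := congrFun (congrFun hsum a) b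
    simpa [Matrix.add_apply, Complex.add_re] using congrArg Complex.re this
  have e00 := hsumE 0 0
  have e11 := hsumE 1 1
  have e01 := hsumE 0 1
  have e10 := hsumE 1 0
  simp [Matrix.one_apply] at e00 e11 e01 e10
  -- expand goal
  simp only [Matrix.trace, Matrix.diag, Matrix.mul_apply, Fin.sum_univ_two,
    Matrix.add_apply, Matrix.sub_apply, Matrix.of_apply, Matrix.cons_val', Matrix.cons_val_zero,
    Matrix.cons_val_one, Matrix.head_cons, Matrix.head_fin_const, Matrix.empty_val',
    Matrix.cons_val_fin_one]
  simp only [Complex.add_re, Complex.sub_re, Complex.mul_re, Complex.ofReal_re,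
    Complex.ofReal_im, Complex.add_im, Complex.sub_im, Complex.one_re, Complex.one_im,
    Complex.neg_re, Complex.neg_im, Complex.zero_re, Complex.zero_im]
  have E1 : (1+C)*((N 0 0 0 0).re + (N 0 1 0 0).re + (N 1 0 0 0).re + (N 1 1 0 0).re)
      = 1 + C := by rw [e00]; ring
  have E2 : (1-C)*((N 0 0 1 1).re + (N 0 1 1 1).re + (N 1 0 1 1).re + (N 1 1 1 1).re)
      = 1 - C := by rw [e11]; ring
  ring_nf
  ring_nf at q01 q10 E1 E2
  have hx : 0 ≤ (1 - C) * (N 0 0 1 1).re := mul_nonneg (by linarith) q00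
  have hy : 0 ≤ (1 + C) * (N 1 1 0 0).re := mul_nonneg (by linarith) q11
  ring_nf at hx hy
  linarith [q01, q10, E1, E2, hx, hy]
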